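/- In any partition of the edge set of K_n into cliques, if the largest clique has s vertices, all other cliques have at most t vertices, s·t < n, and √n ≤ s, then the number of cliques in the partition exceeds n. -/
import Mathlib


/-- `P` is a clique partition of `G`. -/
def IsCliquePartition {V : Type*} (G : SimpleGraph V) (P : Finset (Finset V)) : Prop :=
  (∀ Q ∈ P, ∀ u ∈ Q, ∀ v ∈ Q, u ≠ v → G.Adj u v) ∧
  (∀ u v : V, G.Adj u v → ∃! Q : Finset V, Q ∈ P ∧ u ∈ Q ∧ v ∈ Q)

/-- Auxiliary arithmetic fact over the integers. -/
lemma stmt16_arith (n s t : ℤ) (ht2 : 2 ≤ t) (h1 : 1 ≤ s) (hst : s*t + 1 ≤ n) (hns : n ≤ s^2)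
    (hmain : n*n - n ≤ s*s - s + (n-1)*(t*t - t)) : False := by
  have hsn : 2*s + 1 ≤ n := by nlinarith
  have hA : 0 ≤ n - 1 - s*t := by linarith
  set X : ℤ := (n-s)*(n+s-1) with hXdef
  have hXpos : 0 < X := by
    have : 0 < n - s := by linarith
    have : 0 < n + s - 1 := by linarith
    positivity
  have hX : X ≤ (n-1)*(t*t-t) := by nlinarith [hmain]
  have hXmul : s^2 * X ≤ s^2 * ((n-1)*(t*t-t)) :=
    mul_le_mul_of_nonneg_left hX (by positivity)
  have e1 : s^2 * ((n-1)*(t*t-t)) ≤ (n-1)*(n-1)*(n-1-s) := by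
    nlinarith [mul_nonneg hA (show (0:ℤ) ≤ s*t - s by nlinarith),
      mul_nonneg (mul_nonneg hA (show (0:ℤ) ≤ n-1 by linarith)) (show (0:ℤ) ≤ s*t - s by nlinarith),
      mul_nonneg (mul_nonneg (show (0:ℤ) ≤ s*t by positivity) hA) (show (0:ℤ) ≤ n-1 by linarith)]
  have ha : (0:ℤ) ≤ n-1-s := by linarith
  have hs0 : (0:ℤ) ≤ s := by linarith
  have e2 : (n-1)*(n-1)*(n-1-s) < n * X := by
    nlinarith [mul_nonneg (mul_nonneg ha ha) hs0, mul_nonneg (mul_nonneg ha hs0) hs0,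
      mul_nonneg ha hs0, mul_nonneg ha ha, mul_nonneg hs0 hs0]
  have e3 : n * X ≤ s^2 * X := mul_le_mul_of_nonneg_right hns hXpos.le
  linarith

/-- In any partition of the edge set of `K_n` into cliques, if the largest
clique `Q₀` has `s` vertices, all other cliques have at most `t` vertices (the second
largest clique having `t ≥ 2` vertices), `s·t < n` and `√n ≤ s`, then the number of
cliques in the partition exceeds `n`. -/
theorem stmt16 (n s t : ℕ) (ht2 : 2 ≤ t)
    (P : Finset (Finset (Fin n))) (hP : IsCliquePartition (⊤ : SimpleGraph (Fin n)) P)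
    (Q₀ : Finset (Fin n)) (hQ₀ : Q₀ ∈ P) (hs : Q₀.card = s)
    (hmax : ∀ Q ∈ P, Q.card ≤ s)
    (ht : ∀ Q ∈ P, Q ≠ Q₀ → Q.card ≤ t)
    (hst : s * t < n) (hsn : Real.sqrt n ≤ s) :
    n < P.card := by
  classical
  obtain ⟨hadj, huniq⟩ := hP
  -- the offDiag pairs of univ are the disjoint union of offDiags of cliques
  have hdisj : ∀ Q ∈ P, ∀ R ∈ P, Q ≠ R → Disjoint Q.offDiag R.offDiag := by
    intro Q hQ R hR hQR
    rw [Finset.disjoint_left]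
    rintro ⟨u, v⟩ huQ huR
    rw [Finset.mem_offDiag] at huQ huR
    obtain ⟨W, _, hWu⟩ := huniq u v (by simpa using huQ.2.2)
    exact hQR ((hWu Q ⟨hQ, huQ.1, huQ.2.1⟩).trans (hWu R ⟨hR, huR.1, huR.2.1⟩).symm)
  have hcover : (Finset.univ : Finset (Fin n)).offDiag = P.biUnion (fun Q => Q.offDiag) := by
    ext ⟨u, v⟩
    simp only [Finset.mem_offDiag, Finset.mem_biUnion, Finset.mem_univ, true_and]
    constructor
    · intro huv
      obtain ⟨Q, ⟨hQ, hu, hv⟩, _⟩ := huniq u v (by simpa using huv)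
      exact ⟨Q, hQ, hu, hv, huv⟩
    · rintro ⟨Q, _, _, _, huv⟩
      exact huv
  have hcount : n * n - n = ∑ Q ∈ P, (Q.card * Q.card - Q.card) := by
    have := congrArg Finset.card hcover
    rwa [Finset.card_biUnion hdisj, Finset.offDiag_card, Finset.card_univ, Fintype.card_fin,
      funext fun Q => Finset.offDiag_card Q] at this
  -- basic numeric facts
  have hn1 : 1 ≤ n := lt_of_le_of_lt (Nat.zero_le _) hst
  have hns : n ≤ s ^ 2 := by
    have h1 : (n:ℝ) ≤ (s:ℝ)^2 := by
      nlinarith [Real.sq_sqrt (show (0:ℝ) ≤ (n:ℝ) by positivity), Real.sqrt_nonneg (n:ℝ), hsn]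
    exact_mod_cast h1
  have hs1 : 1 ≤ s := by
    rcases Nat.eq_zero_or_pos s with h | h
    · simp [h] at hns; omega
    · exact h
  -- suppose for contradiction that the number of cliques is at most n
  by_contra hc
  push_neg at hc
  -- bound the sum
  have hsplit : ∑ Q ∈ P, (Q.card * Q.card - Q.card)
      = (s * s - s) + ∑ Q ∈ P.erase Q₀, (Q.card * Q.card - Q.card) := by
    rw [← Finset.add_sum_erase P _ hQ₀, hs]
  have hbound : ∑ Q ∈ P.erase Q₀, (Q.card * Q.card - Q.card) ≤ (P.card - 1) * (t * t - t) := by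
    calc ∑ Q ∈ P.erase Q₀, (Q.card * Q.card - Q.card)
        ≤ ∑ _Q ∈ P.erase Q₀, (t * t - t) := by
          apply Finset.sum_le_sum
          intro Q hQ
          have hQt : Q.card ≤ t := ht Q (Finset.mem_of_mem_erase hQ) (Finset.ne_of_mem_erase hQ)
          have h2 := Nat.mul_le_mul hQt (Nat.sub_le_sub_right hQt 1)
          rw [Nat.mul_sub, Nat.mul_sub, mul_one, mul_one] at h2
          exact h2
      _ = (P.card - 1) * (t * t - t) := by
          rw [Finset.sum_const, Finset.card_erase_of_mem hQ₀, smul_eq_mul]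
  have hmain : n * n - n ≤ s * s - s + (n - 1) * (t * t - t) := by
    have h1 : (P.card - 1) * (t * t - t) ≤ (n - 1) * (t * t - t) :=
      Nat.mul_le_mul_right _ (by omega)
    rw [hcount, hsplit]
    exact Nat.add_le_add_left (le_trans hbound h1) _
  -- cast to the integers and conclude
  have htt : t ≤ t * t := Nat.le_mul_of_pos_left t (by omega)
  have hss : s ≤ s * s := Nat.le_mul_of_pos_left s (by omega)
  have hnn : n ≤ n * n := Nat.le_mul_of_pos_left n (by omega)
  have hmainZ : (n:ℤ)*n - n ≤ (s:ℤ)*s - s + ((n:ℤ)-1)*((t:ℤ)*t - t) := by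
    zify [htt, hss, hnn, hn1] at hmain
    convert hmain using 2 <;> ring
  exact stmt16_arith n s t (by exact_mod_cast ht2) (by exact_mod_cast hs1)
    (by exact_mod_cast hst) (by exact_mod_cast hns) hmainZ
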